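/- (Latent projection preserves ancestral relations.) Let G be a directed mixed graph and M ⊆ V(G). For all nodes X, Y ∈ M: X ∈ an(Y) in G if and only if X is an ancestor of Y in the latent projection of G onto M. -/

import Mathlib

/-- The three ways an edge of a directed mixed graph can occur on a walk,
when traversed from left to right: `fwd` is a directed edge pointing to the
right node, `bwd` is a directed edge pointing to the left node, and `bi` is
a bidirected edge. -/
inductive EdgeDir : Type
  | fwd
  | bwd
  | bi
  deriving DecidableEq

/-- The edge has an arrowhead at its right endpoint. -/
def EdgeDir.headAtRight (e : EdgeDir) : Prop := e = .fwd ∨ e = .bi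

/-- The edge has an arrowhead at its left endpoint. -/
def EdgeDir.headAtLeft (e : EdgeDir) : Prop := e = .bwd ∨ e = .bi

/-- A directed mixed graph (DMG) on node type `α`: an irreflexive relation of
directed edges and an irreflexive symmetric relation of bidirected edges. -/
structure DMG (α : Type*) where
  dir : α → α → Prop
  bidir : α → α → Prop
  dir_irrefl : ∀ x, ¬ dir x x
  bidir_irrefl : ∀ x, ¬ bidir x x
  bidir_symm : ∀ x y, bidir x y → bidir y x

namespace DMG

variable {α : Type*}

/-- `G.Anc x y`: there is a directed path (possibly of length zero) from `x` to `y`,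
i.e. `x` is an ancestor of `y` (equivalently, `y` is a descendant of `x`). -/
def Anc (G : DMG α) (x y : α) : Prop := Relation.ReflTransGen G.dir x y

/-- Ancestors of a set of nodes. -/
def ancSet (G : DMG α) (S : Set α) : Set α := {x | ∃ y ∈ S, G.Anc x y}

/-- The strongly connected component of `x`: all nodes that are both ancestors
and descendants of `x`. -/
def scc (G : DMG α) (x : α) : Set α := {y | G.Anc y x ∧ G.Anc x y}

/-- Validity of one step of a walk, from `a` to `b`, traversed as `e`. -/
def StepValid (G : DMG α) (a : α) (e : EdgeDir) (b : α) : Prop :=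
  match e with
  | .fwd => G.dir a b
  | .bwd => G.dir b a
  | .bi => G.bidir a b

/-- A walk from `x` to `y` in a DMG `G`: an alternating sequence of `n + 1` nodes
and `n` edges of `G`. -/
structure Walk (G : DMG α) (x y : α) where
  n : ℕ
  node : Fin (n + 1) → α
  edge : Fin n → EdgeDir
  first_eq : node 0 = x
  last_eq : node (Fin.last n) = y
  valid : ∀ i : Fin n, G.StepValid (node i.castSucc) (edge i) (node i.succ)

namespace Walk

variable {G : DMG α} {x y : α}

/-- A path is a walk all of whose nodes are distinct. -/
def IsPath (w : Walk G x y) : Prop := Function.Injective w.node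

/-- The interior node at position `i + 1` of the walk is a collider: both
adjacent edges have an arrowhead at it. -/
def IsColliderAt (w : Walk G x y) (i : ℕ) (h : i + 1 < w.n) : Prop :=
  (w.edge ⟨i, by omega⟩).headAtRight ∧ (w.edge ⟨i + 1, h⟩).headAtLeft

/-- The walk is σ-blocked by the conditioning set `C`. -/
def Blocked (w : Walk G x y) (C : Set α) : Prop :=
  x ∈ C ∨ y ∈ C ∨
  (∃ (i : ℕ) (h : i + 1 < w.n), w.IsColliderAt i h ∧
    w.node ⟨i + 1, by omega⟩ ∉ G.ancSet C) ∨
  (∃ (i : ℕ) (h : i + 1 < w.n), ¬ w.IsColliderAt i h ∧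
    w.node ⟨i + 1, by omega⟩ ∈ C ∧
    ((w.edge ⟨i, by omega⟩ = .bwd ∧
        w.node ⟨i, by omega⟩ ∉ G.scc (w.node ⟨i + 1, by omega⟩)) ∨
     (w.edge ⟨i + 1, h⟩ = .fwd ∧
        w.node ⟨i + 2, by omega⟩ ∉ G.scc (w.node ⟨i + 1, by omega⟩))))

end Walk

/-- σ-separation: every path between `x` and `y` is σ-blocked by `C`. -/
def sigmaSep (G : DMG α) (x y : α) (C : Set α) : Prop :=
  ∀ w : Walk G x y, w.IsPath → w.Blocked C

/-- A confounding path between `x` and `y`: a path of nonzero length whose first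
edge has an arrowhead at `x`, whose last edge has an arrowhead at `y`, and all of
whose non-endpoint nodes are non-colliders. -/
def IsConfoundingPath {G : DMG α} {x y : α} (w : Walk G x y) : Prop :=
  w.IsPath ∧ ∃ h : 0 < w.n,
    (w.edge ⟨0, h⟩).headAtLeft ∧ (w.edge ⟨w.n - 1, by omega⟩).headAtRight ∧
    ∀ (i : ℕ) (hi : i + 1 < w.n), ¬ w.IsColliderAt i hi

/-- `x` and `y` are confounded in `G` if some confounding path connects them. -/
def Confounded (G : DMG α) (x y : α) : Prop := ∃ w : Walk G x y, IsConfoundingPath w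

/-- A directed path from `x` to `y` (of length at least one) all of whose
intermediate nodes avoid `M`. -/
def DirPathAvoiding (G : DMG α) (M : Set α) (x y : α) : Prop :=
  ∃ l : List α, List.Chain G.dir x (l ++ [y]) ∧ ∀ v ∈ l, v ∉ M

/-- A path between `x` and `y` with an arrowhead at `x` and an arrowhead at `y`,
all of whose intermediate nodes lie outside `M` and are non-colliders. -/
def BidirPathAvoiding (G : DMG α) (M : Set α) (x y : α) : Prop :=
  ∃ w : Walk G x y, w.IsPath ∧ (∃ h : 0 < w.n,
    (w.edge ⟨0, h⟩).headAtLeft ∧ (w.edge ⟨w.n - 1, by omega⟩).headAtRight) ∧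
    ∀ (i : ℕ) (hi : i + 1 < w.n),
      w.node ⟨i + 1, by omega⟩ ∉ M ∧ ¬ w.IsColliderAt i hi

/-- The latent projection of `G` onto the node set `M`. -/
def latentProj (G : DMG α) (M : Set α) : DMG M where
  dir a b := a.1 ≠ b.1 ∧ DirPathAvoiding G M a.1 b.1
  bidir a b := a.1 ≠ b.1 ∧
    (BidirPathAvoiding G M a.1 b.1 ∨ BidirPathAvoiding G M b.1 a.1)
  dir_irrefl := fun _a h => h.1 rfl
  bidir_irrefl := fun _a h => h.1 rfl
  bidir_symm := fun _a _b h => ⟨Ne.symm h.1, Or.symm h.2⟩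

end DMG

section AuxProof

open Relation List

variable {α : Type*}

private lemma split_first_mem (M : Set α) :
    ∀ l : List α, ∀ y ∈ l, y ∈ M →
      ∃ l1 z l2, l = l1 ++ z :: l2 ∧ z ∈ M ∧ ∀ v ∈ l1, v ∉ M := by
  intro l
  induction l with
  | nil => intro y hy; simp at hy
  | cons a l ih =>
    intro y hy hyM
    by_cases ha : a ∈ M
    · exact ⟨[], a, l, rfl, ha, by simp⟩
    · have hyl : y ∈ l := by
        rcases List.mem_cons.mp hy with h | h
        · exact absurd (h ▸ hyM) ha
        · exact h
      obtain ⟨l1, z, l2, heq, hz, hl1⟩ := ih y hyl hyM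
      exact ⟨a :: l1, z, l2, by simp [heq], hz, by
        intro v hv
        rcases List.mem_cons.mp hv with h | h
        · exact h ▸ ha
        · exact hl1 v h⟩

private lemma anc_fwd (G : DMG α) (M : Set α) :
    ∀ n : ℕ, ∀ l : List α, l.length ≤ n → ∀ (x y : α) (hx : x ∈ M) (hy : y ∈ M),
      List.Chain G.dir x l → (x :: l).getLast (List.cons_ne_nil _ _) = y →
      (G.latentProj M).Anc ⟨x, hx⟩ ⟨y, hy⟩ := by
  intro n
  induction n with
  | zero =>
    intro l hl x y hx hy hch hlast
    have : l = [] := List.eq_nil_of_length_eq_zero (Nat.le_zero.mp hl)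
    subst this
    simp at hlast
    subst hlast
    exact Relation.ReflTransGen.refl
  | succ n ih =>
    intro l hl x y hx hy hch hlast
    match l with
    | [] =>
      simp at hlast; subst hlast; exact Relation.ReflTransGen.refl
    | a :: l' =>
      -- y is a member of a :: l'
      have hymem : y ∈ a :: l' := by
        rw [← hlast]
        have : (x :: a :: l').getLast (List.cons_ne_nil _ _)
            = (a :: l').getLast (List.cons_ne_nil _ _) := by
          exact List.getLast_cons (List.cons_ne_nil _ _)
        rw [this]
        exact List.getLast_mem _
      obtain ⟨l1, z, l2, heq, hz, hl1⟩ := split_first_mem M (a :: l') y hymem hy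
      rw [heq] at hch hlast hl
      have hch1 : List.Chain G.dir x (l1 ++ [z]) ∧ List.Chain G.dir z l2 :=
        List.isChain_cons_split.mp hch
      have hdp : DMG.DirPathAvoiding G M x z := ⟨l1, hch1.1, hl1⟩
      have hlast2 : (z :: l2).getLast (List.cons_ne_nil _ _) = y := by
        have h1 : x :: (l1 ++ z :: l2) = (x :: l1) ++ (z :: l2) := by simp
        rw [← hlast, List.getLast_congr (List.cons_ne_nil _ _) (by simp) h1,
          List.getLast_append]
        simp
      have hlen2 : l2.length ≤ n := by
        simp at hl; omega
      have htail : (G.latentProj M).Anc ⟨z, hz⟩ ⟨y, hy⟩ :=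
        ih l2 hlen2 z y hz hy hch1.2 hlast2
      by_cases hxz : x = z
      · subst hxz
        exact htail
      · exact Relation.ReflTransGen.head (⟨hxz, hdp⟩ : (G.latentProj M).dir ⟨x, hx⟩ ⟨z, hz⟩) htail

private lemma anc_of_proj_edge (G : DMG α) (M : Set α) {a b : M}
    (h : (G.latentProj M).dir a b) : G.Anc a.1 b.1 := by
  obtain ⟨-, l, hch, -⟩ := h
  refine List.relationReflTransGen_of_exists_isChain_cons (l ++ [b.1]) hch ?_
  have : (a.1 :: (l ++ [b.1])) = (a.1 :: l) ++ [b.1] := by simp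
  rw [List.getLast_congr (List.cons_ne_nil _ _) (by simp) this, List.getLast_append]
  simp

end AuxProof

/-- latent projection preserves ancestral relations. -/
theorem latent_projection_preserves_ancestors
    {α : Type*} [Fintype α] (G : DMG α) (M : Set α) (X Y : M) :
    G.Anc X.1 Y.1 ↔ (G.latentProj M).Anc X Y := by
  constructor
  · intro h
    obtain ⟨l, hch, hlast⟩ := List.exists_isChain_cons_of_relationReflTransGen h
    exact anc_fwd G M l.length l le_rfl X.1 Y.1 X.2 Y.2 hch hlast
  · intro h
    induction h with
    | refl => exact Relation.ReflTransGen.refl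
    | tail _ hedge ihh => exact ihh.trans (anc_of_proj_edge G M hedge)
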